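/- Let K be a hexagonal trefoil knot with the Huh–Jeon pattern and quadrisecants L1, L2, L3 meeting edge sets {e12,e23,e45,e56}, {e23,e34,e56,e61}, {e34,e45,e61,e12} respectively. Then the intersection point p³₁₂ = L3 ∩ e12 lies strictly between the vertex v2 and the point p¹₁₂ = L1 ∩ e12 along the edge e12... equivalently, p³₁₂ lies in the open half-space P5⁺ containing v2, while p¹₁₂ lies on P5. -/

import Mathlib

noncomputable section

/-- Points of ℝ³. -/
abbrev E3 : Type := Fin 3 → ℝ

/-- A line in ℝ³: the affine span of two distinct points, viewed as a set. -/
def IsLine (L : Set E3) : Prop :=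
  ∃ p q : E3, p ≠ q ∧ L = (affineSpan ℝ ({p, q} : Set E3) : Set E3)

/-- A plane: an affine subspace of dimension 2. -/
def IsPlane (P : AffineSubspace ℝ E3) : Prop :=
  Module.finrank ℝ P.direction = 2

/-- A (combinatorial) hexagon: six vertices in ℝ³, joined cyclically.
Paper vertex `v_i` corresponds to `v (i-1)`, paper edge `e_{i,i+1}` to `edge (i-1)`,
paper disk `Δ_i` to `disk (i-1)`, paper plane `P_i` to `P (i-1)`. -/
structure Hexagon where
  v : Fin 6 → E3

namespace Hexagon

variable (H : Hexagon)

/-- The closed edge from `v i` to `v (i+1)`. -/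
def edge (i : Fin 6) : Set E3 := segment ℝ (H.v i) (H.v (i + 1))

/-- The open edge (interior of the edge) from `v i` to `v (i+1)`. -/
def intEdge (i : Fin 6) : Set E3 := openSegment ℝ (H.v i) (H.v (i + 1))

/-- The hexagonal closed polygonal curve: union of the six edges. -/
def K : Set E3 := ⋃ i, H.edge i

/-- The triangular disk with vertices `v (i-1)`, `v i`, `v (i+1)`. -/
def disk (i : Fin 6) : Set E3 := convexHull ℝ ({H.v (i - 1), H.v i, H.v (i + 1)} : Set E3)

/-- The plane through `v (i-1)`, `v i`, `v (i+1)`. -/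
def P (i : Fin 6) : AffineSubspace ℝ E3 :=
  affineSpan ℝ ({H.v (i - 1), H.v i, H.v (i + 1)} : Set E3)

/-- General position: no three vertices collinear, no four vertices coplanar. -/
def GeneralPosition : Prop :=
  (∀ i j k : Fin 6, i ≠ j → i ≠ k → j ≠ k →
    ¬ Collinear ℝ ({H.v i, H.v j, H.v k} : Set E3)) ∧
  (∀ i j k l : Fin 6, i ≠ j → i ≠ k → i ≠ l → j ≠ k → j ≠ l → k ≠ l →
    ¬ Coplanar ℝ ({H.v i, H.v j, H.v k, H.v l} : Set E3))

/-- The Huh–Jeon intersection pattern: the only nonempty intersections of open edges with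
interiors of triangular disks are `int e23 ∩ int Δ5`, `int e23 ∩ int Δ6`, `int e45 ∩ int Δ1`,
`int e45 ∩ int Δ2`, `int e61 ∩ int Δ3`, `int e61 ∩ int Δ4` (in the paper's labels). -/
def HuhJeon : Prop :=
  ∀ i j : Fin 6, (H.intEdge i ∩ intrinsicInterior ℝ (H.disk j)).Nonempty ↔
    (i, j) ∈ ({(1, 4), (1, 5), (3, 0), (3, 1), (5, 2), (5, 3)} : Set (Fin 6 × Fin 6))

/-- The candidate quadrisecant line `L_{k+1}` of the paper: the intersection of the planes
`P (k+1)` and `P (k+4)` (for `k = 0, 1, 2`).  `QLine 0` is the paper's `L₁ = P₂ ∩ P₅`,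
`QLine 1` is `L₂ = P₃ ∩ P₆`, and `QLine 2` is `L₃ = P₄ ∩ P₁`. -/
def QLine (k : Fin 6) : Set E3 := (H.P (k + 1) : Set E3) ∩ (H.P (k + 4) : Set E3)

end Hexagon

/-- `L` is a quadrisecant of the curve `K`: a line meeting `K` in at least four points. -/
def IsQuadrisecantOf (K L : Set E3) : Prop :=
  IsLine L ∧ ∃ S : Finset E3, S.card = 4 ∧ (S : Set E3) ⊆ K ∩ L

/-- A quadrisecant of the hexagonal knot `H`. -/
def Hexagon.IsQuadrisecant (H : Hexagon) (L : Set E3) : Prop :=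
  IsQuadrisecantOf H.K L

/-- A standard parametrization of the trefoil knot. -/
def trefoilCurve (t : ℝ) : E3 :=
  ![Real.sin t + 2 * Real.sin (2 * t), Real.cos t - 2 * Real.cos (2 * t), - Real.sin (3 * t)]

/-- The standard trefoil knot as a subset of ℝ³. -/
def TrefoilSet : Set E3 := Set.range trefoilCurve

/-- The standard planar round circle (the unknot). -/
def UnknotSet : Set E3 := {x : E3 | x 0 ^ 2 + x 1 ^ 2 = 1 ∧ x 2 = 0}

/-- Two subsets of ℝ³ are equivalent as knots if there is an ambient isotopy of ℝ³
carrying one onto the other. -/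
def KnotEquiv (K₁ K₂ : Set E3) : Prop :=
  ∃ F : ℝ → (E3 ≃ₜ E3), Continuous (fun p : ℝ × E3 => F p.1 p.2) ∧
    F 0 = Homeomorph.refl E3 ∧ (F 1) '' K₁ = K₂

/-- `K` has the knot type of the trefoil. -/
def IsTrefoil (K : Set E3) : Prop := KnotEquiv K TrefoilSet

/-- `K` is an unknot: it has the knot type of a planar circle. -/
def IsUnknot (K : Set E3) : Prop := KnotEquiv K UnknotSet

/-- The closed polygonal curve with vertices `v 0, …, v (n-1)` joined cyclically. -/
def polyCurve (n : ℕ) [NeZero n] (v : Fin n → E3) : Set E3 :=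
  ⋃ i, segment ℝ (v i) (v (i + 1))

/-- `v` determines an embedded (simple) closed polygonal curve: distinct vertices,
adjacent edges meet exactly at their common vertex, non-adjacent edges are disjoint. -/
def IsSimplePolygon (n : ℕ) [NeZero n] (v : Fin n → E3) : Prop :=
  3 ≤ n ∧ Function.Injective v ∧
  (∀ i : Fin n,
    segment ℝ (v i) (v (i + 1)) ∩ segment ℝ (v (i + 1)) (v (i + 2)) = {v (i + 1)}) ∧
  (∀ i j : Fin n, j ≠ i → j ≠ i + 1 → j + 1 ≠ i →
    segment ℝ (v i) (v (i + 1)) ∩ segment ℝ (v j) (v (j + 1)) = ∅)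

namespace Hexagon

/-- The quadrisecant approximation determined by marked points `c i`, `d i` on edge `i`:
`O i = [c i, d i]` (straightened part of edge `i`) and `N i = [d (i-1), c i]`
(the segment cutting the corner at `v i`). -/
def QA (H : Hexagon) (c d : Fin 6 → E3) : Set E3 :=
  (⋃ i, segment ℝ (c i) (d i)) ∪ (⋃ i, segment ℝ (d (i - 1)) (c i))

/-- `c i`, `d i` are exactly the quadrisecant points on edge `i`, occurring in the
order `v i, c i, d i, v (i+1)` along the edge. -/
def QAData (H : Hexagon) (c d : Fin 6 → E3) : Prop :=
  ∀ i : Fin 6,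
    ({c i, d i} : Set E3) = H.edge i ∩ (H.QLine 0 ∪ H.QLine 1 ∪ H.QLine 2) ∧
    Sbtw ℝ (H.v i) (c i) (d i) ∧ Sbtw ℝ (c i) (d i) (H.v (i + 1))

end Hexagon

def detv (a b c : E3) : ℝ :=
  a 0 * (b 1 * c 2 - b 2 * c 1) - a 1 * (b 0 * c 2 - b 2 * c 0) + a 2 * (b 0 * c 1 - b 1 * c 0)

def lin3 (a b : E3) : E3 →ₗ[ℝ] ℝ where
  toFun c := detv a b c
  map_add' x y := by simp [detv]; ring
  map_smul' r x := by simp [detv]; ring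

def pmap (p q r : E3) : E3 →ᵃ[ℝ] ℝ where
  toFun x := detv (q - p) (r - p) (x - p)
  linear := lin3 (q - p) (r - p)
  map_vadd' x v := by
    show detv _ _ (v + x - p) = detv _ _ v + detv _ _ (x - p)
    rw [add_sub_assoc]
    exact (lin3 (q-p) (r-p)).map_add v (x - p)

@[simp] lemma pmap_apply (p q r x : E3) : pmap p q r x = detv (q - p) (r - p) (x - p) := rfl

lemma pmap_self1 (p q r : E3) : pmap p q r p = 0 := by simp [detv]
lemma pmap_self2 (p q r : E3) : pmap p q r q = 0 := by simp [detv]; ring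
lemma pmap_self3 (p q r : E3) : pmap p q r r = 0 := by simp [detv]; ring

/-- An affine functional vanishing on a set vanishes on its affine span. -/
lemma span_zero (A : E3 →ᵃ[ℝ] ℝ) {S : Set E3} (hS : ∀ z ∈ S, A z = 0) {x : E3}
    (hx : x ∈ affineSpan ℝ S) : A x = 0 := by
  have hle : affineSpan ℝ S ≤ AffineSubspace.comap A (AffineSubspace.mk' (0:ℝ) ⊥) := by
    rw [affineSpan_le]
    intro z hz
    simp only [AffineSubspace.coe_comap, Set.mem_preimage, SetLike.mem_coe,
      AffineSubspace.mem_mk', Submodule.mem_bot, vsub_eq_sub, sub_zero]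
    exact hS z hz
  have := hle hx
  simpa [AffineSubspace.mem_comap, AffineSubspace.mem_mk'] using this

lemma lin3_ne_zero {p q r : E3} (h : ¬ Collinear ℝ ({p, q, r} : Set E3)) :
    lin3 (q - p) (r - p) ≠ 0 := by
  intro h0
  apply h
  set a : E3 := q - p with ha
  set b : E3 := r - p with hb
  have hx : ∀ x : E3, detv a b x = 0 := by
    intro x
    have : lin3 a b x = 0 := by rw [h0]; rfl
    simpa [lin3] using this
  have hc := hx ![a 1 * b 2 - a 2 * b 1, a 2 * b 0 - a 0 * b 2, a 0 * b 1 - a 1 * b 0]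
  have hsq : (a 1 * b 2 - a 2 * b 1)^2 + (a 2 * b 0 - a 0 * b 2)^2 + (a 0 * b 1 - a 1 * b 0)^2 = 0 := by
    rw [← hc]; simp [detv]; ring
  have h12 : a 1 * b 2 - a 2 * b 1 = 0 := by nlinarith [sq_nonneg (a 1 * b 2 - a 2 * b 1), sq_nonneg (a 2 * b 0 - a 0 * b 2), sq_nonneg (a 0 * b 1 - a 1 * b 0)]
  have h20 : a 2 * b 0 - a 0 * b 2 = 0 := by nlinarith [sq_nonneg (a 1 * b 2 - a 2 * b 1), sq_nonneg (a 2 * b 0 - a 0 * b 2), sq_nonneg (a 0 * b 1 - a 1 * b 0)]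
  have h01 : a 0 * b 1 - a 1 * b 0 = 0 := by nlinarith [sq_nonneg (a 1 * b 2 - a 2 * b 1), sq_nonneg (a 2 * b 0 - a 0 * b 2), sq_nonneg (a 0 * b 1 - a 1 * b 0)]
  have hq : q = a +ᵥ p := by simp [ha]
  have hr : r = b +ᵥ p := by simp [hb]
  rw [collinear_iff_of_mem (Set.mem_insert p _)]
  by_cases h0a : a = 0
  · refine ⟨b, ?_⟩
    rintro z (rfl | rfl | rfl)
    · exact ⟨0, by simp⟩
    · exact ⟨0, by simp [hq, h0a]⟩
    · exact ⟨1, by simp [hr]⟩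
  · have hex : ∃ i, a i ≠ 0 := by
      by_contra hno
      push_neg at hno
      exact h0a (funext hno)
    obtain ⟨i, hi⟩ := hex
    have key : ∀ j k : Fin 3, a j * b k = a k * b j := by
      intro j k
      fin_cases j <;> fin_cases k <;>
        simp only [Fin.zero_eta, Fin.mk_one, Fin.reduceFinMk] <;> linarith [h12, h20, h01]
    have hbi : b = (b i / a i) • a := by
      funext j
      have hk := key i j
      simp only [Pi.smul_apply, smul_eq_mul]
      field_simp
      linarith [hk]
    refine ⟨a, ?_⟩
    rintro z (rfl | rfl | rfl)
    · exact ⟨0, by simp⟩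
    · exact ⟨1, by simp [hq]⟩
    · refine ⟨b i / a i, ?_⟩
      conv_lhs => rw [hr, hbi]

lemma coplanar_of_vanish (A : E3 →ᵃ[ℝ] ℝ) (hA : A.linear ≠ 0) (p1 p2 p3 p4 : E3)
    (h1 : A p1 = 0) (h2 : A p2 = 0) (h3 : A p3 = 0) (h4 : A p4 = 0) :
    Coplanar ℝ ({p1, p2, p3, p4} : Set E3) := by
  have hker : vectorSpan ℝ ({p1, p2, p3, p4} : Set E3) ≤ LinearMap.ker A.linear := by
    rw [vectorSpan_def, Submodule.span_le]
    rintro v ⟨a, ha, b, hb, rfl⟩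
    have hva : A a = 0 := by
      rcases ha with rfl | rfl | rfl | rfl <;> assumption
    have hvb : A b = 0 := by
      rcases hb with rfl | rfl | rfl | rfl <;> assumption
    simp only [SetLike.mem_coe, LinearMap.mem_ker]
    rw [AffineMap.linearMap_vsub, hva, hvb]
    simp
  have hfin : Module.finrank ℝ (LinearMap.ker A.linear) ≤ 2 := by
    have hsum := LinearMap.finrank_range_add_finrank_ker A.linear
    have hE : Module.finrank ℝ (Fin 3 → ℝ) = 3 := by
      simp [Module.finrank_fin_fun]
    have hrange : LinearMap.range A.linear ≠ ⊥ := by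
      simpa [LinearMap.range_eq_bot] using hA
    have hpos : 0 < Module.finrank ℝ (LinearMap.range A.linear) := by
      rcases Nat.eq_zero_or_pos (Module.finrank ℝ (LinearMap.range A.linear)) with h | h
      · exact absurd (Submodule.finrank_eq_zero.mp h) hrange
      · exact h
    omega
  calc Module.rank ℝ (vectorSpan ℝ ({p1, p2, p3, p4} : Set E3))
      ≤ Module.rank ℝ (LinearMap.ker A.linear) := Submodule.rank_mono hker
    _ = (Module.finrank ℝ (LinearMap.ker A.linear) : Cardinal) := (Module.finrank_eq_rank ℝ _).symm
    _ ≤ (2 : Cardinal) := by exact_mod_cast Nat.cast_le.mpr hfin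

lemma collinear_of_openSeg {p q c : E3} (h : c ∈ openSegment ℝ p q) :
    Collinear ℝ ({p, q, c} : Set E3) := by
  have hc : c ∈ affineSpan ℝ ({p, q} : Set E3) := by
    apply convexHull_subset_affineSpan
    rw [convexHull_pair]
    exact openSegment_subset_segment ℝ p q h
  have hset : ({p, q, c} : Set E3) = insert c {p, q} := by
    ext z; simp; tauto
  rw [hset, collinear_insert_iff_of_mem_affineSpan hc]
  exact collinear_pair ℝ p q

lemma coplanar_of_segs {p q r s' c : E3} (hc1 : c ∈ segment ℝ p q)
    (hc2 : c ∈ openSegment ℝ r s') : Coplanar ℝ ({p, q, r, s'} : Set E3) := by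
  obtain ⟨α1, α2, hα1, hα2, hsum, hc⟩ := hc2
  have hcs : c ∈ affineSpan ℝ ({p, q, r} : Set E3) := by
    apply convexHull_subset_affineSpan
    apply convexHull_mono (show ({p, q} : Set E3) ⊆ {p, q, r} by intro z hz; simp at hz ⊢; tauto)
    rw [convexHull_pair]; exact hc1
  have hrmem : r ∈ affineSpan ℝ ({p, q, r} : Set E3) := mem_affineSpan ℝ (by simp)
  have hs' : s' = (1/α2) • (c -ᵥ r) +ᵥ r := by
    rw [vsub_eq_sub, vadd_eq_add, ← hc]
    have hα : α1 = 1 - α2 := by linarith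
    rw [hα]
    match_scalars <;> field_simp <;> ring
  have hsmem : s' ∈ affineSpan ℝ ({p, q, r} : Set E3) := by
    rw [hs']; exact AffineSubspace.smul_vsub_vadd_mem _ _ hcs hrmem hrmem
  have hset : ({p, q, r, s'} : Set E3) = insert s' {p, q, r} := by
    ext z; simp; tauto
  rw [hset, coplanar_insert_iff_of_mem_affineSpan hsmem]
  exact coplanar_triple ℝ p q r

set_option maxHeartbeats 1000000 in
lemma keyineq (f0 f1 g0 g1 g5 fx ay t ax s e k m n u1 u2 : ℝ)
    (hayt : ay + t = 1) (hay : 0 ≤ ay) (ht : 0 ≤ t)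
    (haxs : ax + s = 1) (hax : 0 ≤ ax) (hs : 0 ≤ s)
    (hf0 : f0 ≠ 0) (hf1 : f1 ≠ 0) (hg0 : g0 ≠ 0) (hg1 : g1 ≠ 0)
    (hy : ay * f0 + t * f1 = 0)
    (hxg : ax * g0 + s * g1 = 0)
    (hfx : fx = ax * f0 + s * f1)
    (he : 0 < e) (hk : 0 < k) (hn : 0 < n)
    (hu1 : 0 < u1) (hu2 : 0 < u2)
    (hR1 : m * f0 + n * f1 = 0)
    (hR2 : e * g5 + k * m * g0 + k * n * g1 = 0)
    (hR3 : u1 * g5 + u2 * g0 = 0) :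
    0 < fx * f1 ∧ t < s ∧ 0 < ay ∧ 0 < t ∧ 0 < ax ∧ 0 < s := by
  have ht0 : 0 < t := by
    rcases lt_or_eq_of_le ht with h | h
    · exact h
    · exfalso; apply hf0
      have hayv : ay = 1 := by linarith
      rw [hayv, ← h] at hy; simpa using hy
  have hayp : 0 < ay := by
    rcases lt_or_eq_of_le hay with h | h
    · exact h
    · exfalso; apply hf1
      have htv : t = 1 := by linarith
      rw [htv, ← h] at hy; simpa using hy
  have hsp : 0 < s := by
    rcases lt_or_eq_of_le hs with h | h
    · exact h
    · exfalso; apply hg0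
      have haxv : ax = 1 := by linarith
      rw [haxv, ← h] at hxg; simpa using hxg
  have haxp : 0 < ax := by
    rcases lt_or_eq_of_le hax with h | h
    · exact h
    · exfalso; apply hg1
      have hsv : s = 1 := by linarith
      rw [hsv, ← h] at hxg; simpa using hxg
  have hf1sq : 0 < f1 ^ 2 := by positivity
  have hg1sq : 0 < g1 ^ 2 := by positivity
  have hkeyf : ay * (f0 * f1) = -(t * f1 ^ 2) := by linear_combination f1 * hy
  have hkeyg : ax * (g0 * g1) = -(s * g1 ^ 2) := by linear_combination g1 * hxg
  have hf01 : f0 * f1 < 0 := by nlinarith [mul_pos ht0 hf1sq, hayp]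
  have hg01 : g0 * g1 < 0 := by nlinarith [mul_pos hsp hg1sq, haxp]
  have hY : (1 - t) * f0 + t * f1 = 0 := by linear_combination hy - f0 * hayt
  have hX : (1 - s) * g0 + s * g1 = 0 := by linear_combination hxg - g0 * haxs
  have identity1 : u1 * k * n * (f0 * g1 - f1 * g0) = e * u2 * (f0 * g0) := by
    linear_combination (-(u1 * k * g0)) * hR1 + (u1 * f0) * hR2 + (-(e * f0)) * hR3
  have identity2 : (s - t) * ((f0 - f1) * (g0 - g1)) = f0 * g1 - f1 * g0 := by
    linear_combination (-(f0 - f1)) * hX + (g0 - g1) * hY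
  have identity3 : fx = (s - t) * (f1 - f0) := by
    linear_combination hfx + hY + f0 * haxs
  have hf0sq : 0 < f0 ^ 2 := by positivity
  have hg0sq : 0 < g0 ^ 2 := by positivity
  have hf0f : 0 < f0 * (f0 - f1) := by
    have hr : f0 * (f0 - f1) = f0 ^ 2 - f0 * f1 := by ring
    rw [hr]; linarith
  have hg0g : 0 < g0 * (g0 - g1) := by
    have hr : g0 * (g0 - g1) = g0 ^ 2 - g0 * g1 := by ring
    rw [hr]; linarith
  have hid : (s - t) * (u1 * k * n * ((f0 - f1) * (g0 - g1))) = e * u2 * (f0 * g0) := by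
    linear_combination (u1 * k * n) * identity2 + identity1
  have hid2 : (s - t) * (u1 * k * n * ((f0 - f1) * (g0 - g1)) ^ 2) =
      (e * u2 * (f0 * (f0 - f1))) * (g0 * (g0 - g1)) := by
    linear_combination ((f0 - f1) * (g0 - g1)) * hid
  have hpos : 0 < (e * u2 * (f0 * (f0 - f1))) * (g0 * (g0 - g1)) :=
    mul_pos (mul_pos (mul_pos he hu2) hf0f) hg0g
  have hst : t < s := by
    have hQ : (0:ℝ) ≤ u1 * k * n * ((f0 - f1) * (g0 - g1)) ^ 2 := by positivity
    by_contra hcon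
    push_neg at hcon
    have hle : (s - t) * (u1 * k * n * ((f0 - f1) * (g0 - g1)) ^ 2) ≤ 0 :=
      mul_nonpos_iff.mpr (Or.inr ⟨by linarith, hQ⟩)
    linarith
  have hfxf1 : 0 < fx * f1 := by
    have h3 : fx * f1 = (s - t) * (f1 ^ 2 - f0 * f1) := by linear_combination f1 * identity3
    rw [h3]
    exact mul_pos (by linarith) (by linarith)
  exact ⟨hfxf1, hst, hayp, ht0, haxp, hsp⟩


/-- With `L1 = P2 ∩ P5` (= `QLine 0`) and `L3 = P4 ∩ P1` (= `QLine 2`), the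
point `p³₁₂ = L3 ∩ e12` lies strictly between `v2` and `p¹₁₂ = L1 ∩ e12` along `e12`;
equivalently `p³₁₂` lies in the open half-space of `P5` containing `v2` while `p¹₁₂` lies
on `P5`.  (Here `e12` is edge `0`, `v2` is `v 1`, `P5` is `P 4`.) -/
theorem stmt12 (H : Hexagon) (hgp : H.GeneralPosition) (hhj : H.HuhJeon)
    (htre : IsTrefoil H.K)
    (x y : E3) (hx : x ∈ H.edge 0 ∩ H.QLine 2) (hy : y ∈ H.edge 0 ∩ H.QLine 0) :
    (H.P 4).SSameSide x (H.v 1) ∧ y ∈ (H.P 4 : Set E3) ∧ Sbtw ℝ (H.v 1) x y := by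
  classical
  obtain ⟨hgp1, hgp2⟩ := hgp
  set f : E3 →ᵃ[ℝ] ℝ := pmap (H.v 3) (H.v 4) (H.v 5) with hfdef
  set g : E3 →ᵃ[ℝ] ℝ := pmap (H.v 2) (H.v 3) (H.v 4) with hgdef
  have hfvan : ∀ z ∈ ({H.v 3, H.v 4, H.v 5} : Set E3), f z = 0 := by
    intro z hz
    simp only [Set.mem_insert_iff, Set.mem_singleton_iff] at hz
    rcases hz with rfl | rfl | rfl
    · exact pmap_self1 _ _ _
    · exact pmap_self2 _ _ _
    · exact pmap_self3 _ _ _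
  have hgvan : ∀ z ∈ ({H.v 2, H.v 3, H.v 4} : Set E3), g z = 0 := by
    intro z hz
    simp only [Set.mem_insert_iff, Set.mem_singleton_iff] at hz
    rcases hz with rfl | rfl | rfl
    · exact pmap_self1 _ _ _
    · exact pmap_self2 _ _ _
    · exact pmap_self3 _ _ _
  have hfP4 : ∀ z, z ∈ H.P 4 → f z = 0 := fun z hz => span_zero f hfvan hz
  have hgP3 : ∀ z, z ∈ H.P 3 → g z = 0 := fun z hz => span_zero g hgvan hz
  have hcol345 : ¬ Collinear ℝ ({H.v 3, H.v 4, H.v 5} : Set E3) :=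
    hgp1 3 4 5 (by decide) (by decide) (by decide)
  have hcol234 : ¬ Collinear ℝ ({H.v 2, H.v 3, H.v 4} : Set E3) :=
    hgp1 2 3 4 (by decide) (by decide) (by decide)
  have hflin : f.linear ≠ 0 := lin3_ne_zero hcol345
  have hglin : g.linear ≠ 0 := lin3_ne_zero hcol234
  have hfv0 : f (H.v 0) ≠ 0 := by
    intro h0
    exact hgp2 0 3 4 5 (by decide) (by decide) (by decide) (by decide) (by decide) (by decide)
      (coplanar_of_vanish f hflin _ _ _ _ h0 (pmap_self1 _ _ _) (pmap_self2 _ _ _)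
        (pmap_self3 _ _ _))
  have hfv1 : f (H.v 1) ≠ 0 := by
    intro h0
    exact hgp2 1 3 4 5 (by decide) (by decide) (by decide) (by decide) (by decide) (by decide)
      (coplanar_of_vanish f hflin _ _ _ _ h0 (pmap_self1 _ _ _) (pmap_self2 _ _ _)
        (pmap_self3 _ _ _))
  have hgv0 : g (H.v 0) ≠ 0 := by
    intro h0
    exact hgp2 0 2 3 4 (by decide) (by decide) (by decide) (by decide) (by decide) (by decide)
      (coplanar_of_vanish g hglin _ _ _ _ h0 (pmap_self1 _ _ _) (pmap_self2 _ _ _)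
        (pmap_self3 _ _ _))
  have hgv1 : g (H.v 1) ≠ 0 := by
    intro h0
    exact hgp2 1 2 3 4 (by decide) (by decide) (by decide) (by decide) (by decide) (by decide)
      (coplanar_of_vanish g hglin _ _ _ _ h0 (pmap_self1 _ _ _) (pmap_self2 _ _ _)
        (pmap_self3 _ _ _))
  obtain ⟨hxE, hxQ⟩ := hx
  obtain ⟨hyE, hyQ⟩ := hy
  have hx3 : x ∈ H.P 3 := hxQ.1
  have hy4 : y ∈ H.P 4 := hyQ.2
  have hfy0 : f y = 0 := hfP4 y hy4
  have hgx0 : g x = 0 := hgP3 x hx3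
  have hxE' : x ∈ segment ℝ (H.v 0) (H.v 1) := hxE
  have hyE' : y ∈ segment ℝ (H.v 0) (H.v 1) := hyE
  obtain ⟨ay, t, hay, ht, hayt, hyrep⟩ := hyE'
  obtain ⟨ax, s, hax, hs, haxs, hxrep⟩ := hxE'
  have hfy : ay * f (H.v 0) + t * f (H.v 1) = 0 := by
    have hcombo := Convex.combo_affine_apply (f := f) (x := H.v 0) (y := H.v 1) hayt
    rw [hyrep, hfy0] at hcombo
    simp only [smul_eq_mul] at hcombo
    linarith
  have hgx : ax * g (H.v 0) + s * g (H.v 1) = 0 := by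
    have hcombo := Convex.combo_affine_apply (f := g) (x := H.v 0) (y := H.v 1) haxs
    rw [hxrep, hgx0] at hcombo
    simp only [smul_eq_mul] at hcombo
    linarith
  have hfx : f x = ax * f (H.v 0) + s * f (H.v 1) := by
    have hcombo := Convex.combo_affine_apply (f := f) (x := H.v 0) (y := H.v 1) haxs
    rw [hxrep] at hcombo
    simpa only [smul_eq_mul] using hcombo
  obtain ⟨c, hcE, hcD⟩ := (hhj 3 0).mpr (by
    simp only [Set.mem_insert_iff, Set.mem_singleton_iff, Prod.mk.injEq]
    decide)
  have hcD' : c ∈ convexHull ℝ ({H.v 5, H.v 0, H.v 1} : Set E3) := intrinsicInterior_subset hcD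
  obtain ⟨ap, hapE, hapD⟩ := (hhj 5 3).mpr (by
    simp only [Set.mem_insert_iff, Set.mem_singleton_iff, Prod.mk.injEq]
    decide)
  have hapseg : ap ∈ openSegment ℝ (H.v 5) (H.v 0) := hapE
  have hapD' : ap ∈ convexHull ℝ ({H.v 2, H.v 3, H.v 4} : Set E3) :=
    intrinsicInterior_subset hapD
  have hgap : g ap = 0 := span_zero g hgvan (convexHull_subset_affineSpan _ hapD')
  obtain ⟨u1, u2, hu1, hu2, hu12, haprep⟩ := hapseg
  have hR3 : u1 * g (H.v 5) + u2 * g (H.v 0) = 0 := by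
    have hcombo := Convex.combo_affine_apply (f := g) (x := H.v 5) (y := H.v 0) hu12
    rw [haprep, hgap] at hcombo
    simp only [smul_eq_mul] at hcombo
    linarith
  have hcopen : c ∈ openSegment ℝ (H.v 3) (H.v 4) := hcE
  obtain ⟨w1, w2, hw1, hw2, hw12, hcrep⟩ := hcopen
  have hcopen' : c ∈ openSegment ℝ (H.v 3) (H.v 4) := ⟨w1, w2, hw1, hw2, hw12, hcrep⟩
  have hfc : f c = 0 := by
    have hcombo := Convex.combo_affine_apply (f := f) (x := H.v 3) (y := H.v 4) hw12
    rw [hcrep, pmap_self1, pmap_self2] at hcombo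
    simpa using hcombo
  have hgc : g c = 0 := by
    have hcombo := Convex.combo_affine_apply (f := g) (x := H.v 3) (y := H.v 4) hw12
    rw [hcrep, pmap_self2, pmap_self3] at hcombo
    simpa using hcombo
  rw [convexHull_insert (by exact ⟨H.v 0, by simp⟩), mem_convexJoin] at hcD'
  obtain ⟨p5, hp5, z, hz, hczseg⟩ := hcD'
  rw [Set.mem_singleton_iff] at hp5
  subst hp5
  rw [convexHull_pair] at hz
  obtain ⟨e, k, he0, hk0, hek, hcs⟩ := hczseg
  obtain ⟨m, n, hm0, hn0, hmn, hzs⟩ := hz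
  have hkpos : 0 < k := by
    rcases lt_or_eq_of_le hk0 with h | h
    · exact h
    · exfalso
      have hcv5 : c = H.v 5 := by
        rw [← hcs, ← h, show e = 1 by linarith]
        simp
      rw [hcv5] at hcopen'
      exact hcol345 (collinear_of_openSeg hcopen')
  have hepos : 0 < e := by
    rcases lt_or_eq_of_le he0 with h | h
    · exact h
    · exfalso
      have hcz : c = z := by
        rw [← hcs, ← h, show k = 1 by linarith]
        simp
      have hczseg2 : c ∈ segment ℝ (H.v 0) (H.v 1) := by
        rw [hcz]; exact ⟨m, n, hm0, hn0, hmn, hzs⟩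
      exact hgp2 0 1 3 4 (by decide) (by decide) (by decide) (by decide) (by decide) (by decide)
        (coplanar_of_segs hczseg2 hcopen')
  have hnpos : 0 < n := by
    rcases lt_or_eq_of_le hn0 with h | h
    · exact h
    · exfalso
      have hzv0 : z = H.v 0 := by
        rw [← hzs, ← h, show m = 1 by linarith]
        simp
      have hcseg50 : c ∈ segment ℝ (H.v 5) (H.v 0) := by
        rw [← hzv0]; exact ⟨e, k, he0, hk0, hek, hcs⟩
      exact hgp2 5 0 3 4 (by decide) (by decide) (by decide) (by decide) (by decide) (by decide)
        (coplanar_of_segs hcseg50 hcopen')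
  have hfz : f z = m * f (H.v 0) + n * f (H.v 1) := by
    have hcombo := Convex.combo_affine_apply (f := f) (x := H.v 0) (y := H.v 1) hmn
    rw [hzs] at hcombo
    simpa only [smul_eq_mul] using hcombo
  have hgz : g z = m * g (H.v 0) + n * g (H.v 1) := by
    have hcombo := Convex.combo_affine_apply (f := g) (x := H.v 0) (y := H.v 1) hmn
    rw [hzs] at hcombo
    simpa only [smul_eq_mul] using hcombo
  have hfck : f c = e * f (H.v 5) + k * f z := by
    have hcombo := Convex.combo_affine_apply (f := f) (x := H.v 5) (y := z) hek
    rw [hcs] at hcombo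
    simpa only [smul_eq_mul] using hcombo
  have hgck : g c = e * g (H.v 5) + k * g z := by
    have hcombo := Convex.combo_affine_apply (f := g) (x := H.v 5) (y := z) hek
    rw [hcs] at hcombo
    simpa only [smul_eq_mul] using hcombo
  have hf5 : f (H.v 5) = 0 := pmap_self3 _ _ _
  have hkR1 : k * (m * f (H.v 0) + n * f (H.v 1)) = 0 := by
    rw [← hfz]
    rw [hfc, hf5] at hfck
    linarith
  have hR1 : m * f (H.v 0) + n * f (H.v 1) = 0 :=
    (mul_eq_zero.mp hkR1).resolve_left (ne_of_gt hkpos)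
  have hR2 : e * g (H.v 5) + k * m * g (H.v 0) + k * n * g (H.v 1) = 0 := by
    rw [hgc, hgz] at hgck
    linear_combination (-1 : ℝ) * hgck
  obtain ⟨hfxf1, hst, hayp, ht0, haxp, hsp⟩ :=
    keyineq (f (H.v 0)) (f (H.v 1)) (g (H.v 0)) (g (H.v 1)) (g (H.v 5)) (f x)
      ay t ax s e k m n u1 u2 hayt hay ht haxs hax hs hfv0 hfv1 hgv0 hgv1
      hfy hgx hfx hepos hkpos hnpos hu1 hu2 hR1 hR2 hR3
  have hxy : x -ᵥ y = (s - t) • (H.v 1 - H.v 0) := by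
    rw [vsub_eq_sub, ← hxrep, ← hyrep]
    match_scalars <;> linarith
  have hv1y : H.v 1 -ᵥ y = ay • (H.v 1 - H.v 0) := by
    rw [vsub_eq_sub, ← hyrep]
    match_scalars <;> linarith
  refine ⟨⟨⟨y, hy4, y, hy4, ?_⟩, ?_, ?_⟩, hy4, ?_, ?_, ?_⟩
  · exact Or.inr (Or.inr ⟨ay, s - t, hayp, sub_pos.mpr hst, by rw [hxy, hv1y, smul_comm]⟩)
  · intro hmem
    rw [hfP4 x hmem, zero_mul] at hfxf1
    exact lt_irrefl _ hfxf1
  · intro hmem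
    exact hfv1 (hfP4 _ hmem)
  · rw [← mem_segment_iff_wbtw]
    refine ⟨(s - t) / ay, ax / ay, div_nonneg (by linarith) (le_of_lt hayp),
      div_nonneg hax (le_of_lt hayp), ?_, ?_⟩
    · field_simp
      linarith
    · rw [← hyrep, ← hxrep]
      match_scalars <;> (field_simp; try linear_combination t * haxs - s * hayt)
  · intro h5
    rw [h5] at hgx0
    exact hgv1 hgx0
  · intro h6
    rw [h6, hfy0, zero_mul] at hfxf1
    exact lt_irrefl _ hfxf1
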